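/- Let p_0(t) = 2/(√(4t+9) − 1) and q_0 = 1 − p_0. The function f(t) = √t · p_0(t) · q_0(t) = 2√t(√(4t+9) − 3)/(√(4t+9) − 1)^2 is strictly increasing in t for t ≥ 1, tends to 1 as t → ∞, and in particular f(t) < 1 for all t ≥ 1. -/

import Mathlib

open Finset

/-- p-biased measure of a family on ground set of size `n` (= `[n]`). -/
def mu (p : ℝ) (n : ℕ) (G : Finset (Finset ℕ)) : ℝ :=
  ∑ A ∈ G, p ^ A.card * (1 - p) ^ (n - A.card)

/-- p-biased measure of a family on an arbitrary finite ground set `X`. -/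
def muOn (p : ℝ) (X : Finset ℕ) (G : Finset (Finset ℕ)) : ℝ :=
  ∑ A ∈ G, p ^ A.card * (1 - p) ^ (X.card - A.card)

/-- `F_0^t = {F ⊆ [n] : [t] ⊆ F}`. -/
def F0 (n t : ℕ) : Finset (Finset ℕ) :=
  (Finset.Icc 1 n).powerset.filter (fun F => Finset.Icc 1 t ⊆ F)

/-- `F_1^t = {F ⊆ [n] : |F ∩ [t+3]| ≥ t+2}`. -/
def F1 (n t : ℕ) : Finset (Finset ℕ) :=
  (Finset.Icc 1 n).powerset.filter (fun F => t + 2 ≤ (F ∩ Finset.Icc 1 (t + 3)).card)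

/-- `F_2^t = {F ⊆ [n] : |F ∩ [t+6]| ≥ t+4}`. -/
def F2 (n t : ℕ) : Finset (Finset ℕ) :=
  (Finset.Icc 1 n).powerset.filter (fun F => t + 4 ≤ (F ∩ Finset.Icc 1 (t + 6)).card)

/-- `p_0(t) = 2/(√(4t+9) − 1)`. -/
noncomputable def p0 (t : ℕ) : ℝ := 2 / (Real.sqrt (4 * t + 9) - 1)

/-- The family is `r`-wise `t`-intersecting: any `r` members (with repetition)
intersect in at least `t` elements. -/
def RWise (r t : ℕ) (G : Finset (Finset ℕ)) : Prop :=
  ∀ f : Fin r → Finset ℕ, (∀ k, f k ∈ G) → t ≤ (⋂ k, (f k : Set ℕ)).ncard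

/-- The shift `s_{i,j}` of a single set `A`, relative to the family `G`. -/
def shiftSet (i j : ℕ) (G : Finset (Finset ℕ)) (A : Finset ℕ) : Finset ℕ :=
  if A ∩ {i, j} = {j} ∧ (A.erase j ∪ {i}) ∉ G then A.erase j ∪ {i} else A

/-- The shifting operation `σ_{i,j}` applied to a family. -/
def shift (i j : ℕ) (G : Finset (Finset ℕ)) : Finset (Finset ℕ) :=
  G.image (shiftSet i j G)

/-- `G` and `H` are isomorphic as families on ground set `[n]`:
`H` is the image of `G` under a permutation preserving `[n]`. -/
def Iso (n : ℕ) (G H : Finset (Finset ℕ)) : Prop :=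
  ∃ τ : Equiv.Perm ℕ, (∀ x, x ∈ Finset.Icc 1 n ↔ τ x ∈ Finset.Icc 1 n) ∧
    H = G.image (fun A => A.image τ)

/-- `G` is `(3,t)`-maximal on `[n]`. -/
def Max3 (n t : ℕ) (G : Finset (Finset ℕ)) : Prop :=
  (∀ A ∈ G, A ⊆ Finset.Icc 1 n) ∧ RWise 3 t G ∧
    ∀ F : Finset ℕ, F ⊆ Finset.Icc 1 n → F ∉ G → ¬ RWise 3 t (insert F G)

/-- `G` is shifted on `[n]`. -/
def Shifted (n : ℕ) (G : Finset (Finset ℕ)) : Prop :=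
  ∀ i j : ℕ, 1 ≤ i → i < j → j ≤ n → shift i j G = G

/-- One shifting step. -/
def ShiftStep (n : ℕ) (G H : Finset (Finset ℕ)) : Prop :=
  ∃ i j : ℕ, 1 ≤ i ∧ i ≤ n ∧ 1 ≤ j ∧ j ≤ n ∧ H = shift i j G

noncomputable def p0R (t : ℝ) : ℝ := 2 / (Real.sqrt (4 * t + 9) - 1)

noncomputable def fR (t : ℝ) : ℝ := Real.sqrt t * p0R t * (1 - p0R t)


noncomputable def gg (u : ℝ) : ℝ := (u+3)*(u-3)^3/(u-1)^4

lemma gg_mono {a b : ℝ} (ha : 3 < a) (hab : a < b) : gg a < gg b := by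
  have h1 : (0:ℝ) < a - 1 := by linarith
  have h2 : (0:ℝ) < b - 1 := by linarith
  unfold gg
  rw [div_lt_div_iff₀ (by positivity) (by positivity)]
  have hx : (0:ℝ) < a - 3 := by linarith
  have hy : (0:ℝ) < b - a := by linarith
  have key : (b+3)*(b-3)^3*(a-1)^4 - (a+3)*(a-3)^3*(b-1)^4 =
      96*(b-a)^3 +
      16*(b-a)^4 +
      288*(a-3)^1*(b-a)^2 +
      256*(a-3)^1*(b-a)^3 +
      32*(a-3)^1*(b-a)^4 +
      288*(a-3)^2*(b-a)^1 +
      672*(a-3)^2*(b-a)^2 +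
      272*(a-3)^2*(b-a)^3 +
      24*(a-3)^2*(b-a)^4 +
      448*(a-3)^3*(b-a)^1 +
      480*(a-3)^3*(b-a)^2 +
      96*(a-3)^3*(b-a)^3 +
      2*(a-3)^3*(b-a)^4 +
      240*(a-3)^4*(b-a)^1 +
      120*(a-3)^4*(b-a)^2 +
      6*(a-3)^4*(b-a)^3 +
      48*(a-3)^5*(b-a)^1 +
      6*(a-3)^5*(b-a)^2 +
      2*(a-3)^6*(b-a)^1 := by ring
  linarith [key, pow_pos hy 3, pow_pos hy 4, mul_pos (pow_pos hx 1) (pow_pos hy 2), mul_pos (pow_pos hx 1) (pow_pos hy 3), mul_pos (pow_pos hx 1) (pow_pos hy 4), mul_pos (pow_pos hx 2) (pow_pos hy 1), mul_pos (pow_pos hx 2) (pow_pos hy 2), mul_pos (pow_pos hx 2) (pow_pos hy 3), mul_pos (pow_pos hx 2) (pow_pos hy 4), mul_pos (pow_pos hx 3) (pow_pos hy 1), mul_pos (pow_pos hx 3) (pow_pos hy 2), mul_pos (pow_pos hx 3) (pow_pos hy 3), mul_pos (pow_pos hx 3) (pow_pos hy 4), mul_pos (pow_pos hx 4) (pow_pos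 hy 1), mul_pos (pow_pos hx 4) (pow_pos hy 2), mul_pos (pow_pos hx 4) (pow_pos hy 3), mul_pos (pow_pos hx 5) (pow_pos hy 1), mul_pos (pow_pos hx 5) (pow_pos hy 2), mul_pos (pow_pos hx 6) (pow_pos hy 1)]

lemma gg_lt_one {u : ℝ} (hu : 3 < u) : gg u < 1 := by
  have h1 : (0:ℝ) < u - 1 := by linarith
  unfold gg
  rw [div_lt_one (by positivity)]
  nlinarith [sq_nonneg (u-3), sq_nonneg u]

lemma gg_nonneg {u : ℝ} (hu : 3 < u) : 0 ≤ gg u := by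
  have h1 : (0:ℝ) < u - 1 := by linarith
  have h3 : (0:ℝ) < u - 3 := by linarith
  unfold gg; positivity


lemma u_gt_three {t : ℝ} (ht : 1 ≤ t) : 3 < Real.sqrt (4 * t + 9) := by
  have : (3:ℝ) = Real.sqrt 9 := by
    rw [show (9:ℝ) = 3^2 by norm_num, Real.sqrt_sq (by norm_num)]
  rw [this]
  exact Real.sqrt_lt_sqrt (by norm_num) (by linarith)

lemma fR_eq {t : ℝ} (ht : 1 ≤ t) : fR t = Real.sqrt (gg (Real.sqrt (4 * t + 9))) := by
  set u := Real.sqrt (4 * t + 9) with hu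
  have hu3 : 3 < u := u_gt_three ht
  have hu1 : (0:ℝ) < u - 1 := by linarith
  have husq : u ^ 2 = 4 * t + 9 := Real.sq_sqrt (by linarith)
  have hf0 : 0 ≤ fR t := by
    unfold fR p0R
    rw [← hu]
    have : 1 - 2 / (u - 1) = (u - 3)/(u-1) := by field_simp; ring
    rw [this]
    have h3 : (0:ℝ) ≤ u - 3 := by linarith
    have ht0 : (0:ℝ) ≤ Real.sqrt t := Real.sqrt_nonneg t
    apply mul_nonneg (mul_nonneg ht0 (by positivity)) (div_nonneg h3 (le_of_lt hu1))
  have hsq : (fR t) ^ 2 = gg u := by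
    unfold fR p0R gg
    rw [← hu]
    have h1 : Real.sqrt t ^ 2 = t := Real.sq_sqrt (by linarith)
    field_simp
    linear_combination (4*(u-3)^2)*h1 - ((u-3)^2)*husq
  rw [← hsq, Real.sqrt_sq hf0]

lemma sqrt_tendsto_atTop : Filter.Tendsto Real.sqrt Filter.atTop Filter.atTop := by
  apply Filter.tendsto_atTop_atTop.2
  intro b
  exact ⟨b ^ 2, fun a ha => Real.le_sqrt_of_sq_le ha⟩

lemma gg_tendsto : Filter.Tendsto gg Filter.atTop (nhds 1) := by
  have h : Filter.Tendsto (fun u : ℝ => (1+3*u⁻¹)*(1-3*u⁻¹)^3/((1-u⁻¹)^4)) Filter.atTop (nhds 1) := by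
    have hinv : Filter.Tendsto (fun u : ℝ => u⁻¹) Filter.atTop (nhds 0) :=
      tendsto_inv_atTop_zero
    have : Filter.Tendsto (fun u : ℝ => (1+3*u⁻¹)*(1-3*u⁻¹)^3/((1-u⁻¹)^4)) Filter.atTop
        (nhds ((1+3*0)*(1-3*0)^3/((1-0)^4))) := by
      apply Filter.Tendsto.div
      · exact (((tendsto_const_nhds.add (hinv.const_mul 3))).mul
          ((tendsto_const_nhds.sub (hinv.const_mul 3)).pow 3))
      · exact ((tendsto_const_nhds.sub hinv).pow 4)
      · norm_num
    simpa using this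
  apply h.congr'
  filter_upwards [Filter.eventually_gt_atTop (1:ℝ)] with u hu
  have hu0 : u ≠ 0 := by linarith
  have hu1 : u - 1 ≠ 0 := by intro h'; rw [sub_eq_zero] at h'; linarith
  unfold gg
  field_simp

theorem stmt_17 :
    (∀ s t : ℝ, 1 ≤ s → s < t → fR s < fR t) ∧
    Filter.Tendsto fR Filter.atTop (nhds 1) ∧
    (∀ t : ℝ, 1 ≤ t → fR t < 1) := by
  refine ⟨?_, ?_, ?_⟩
  · intro s t hs hst
    have ht : 1 ≤ t := hs.trans hst.le
    rw [fR_eq hs, fR_eq ht]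
    apply Real.sqrt_lt_sqrt (gg_nonneg (u_gt_three hs))
    exact gg_mono (u_gt_three hs)
      (Real.sqrt_lt_sqrt (by linarith) (by linarith))
  · have h1 : Filter.Tendsto (fun t : ℝ => 4 * t + 9) Filter.atTop Filter.atTop := by
      apply Filter.tendsto_atTop_add_const_right
      exact Filter.Tendsto.const_mul_atTop (by norm_num) Filter.tendsto_id
    have h2 : Filter.Tendsto (fun t : ℝ => Real.sqrt (4 * t + 9)) Filter.atTop Filter.atTop :=
      sqrt_tendsto_atTop.comp h1
    have h3 : Filter.Tendsto (fun t : ℝ => gg (Real.sqrt (4 * t + 9)))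
        Filter.atTop (nhds 1) := gg_tendsto.comp h2
    have h4 : Filter.Tendsto (fun t : ℝ => Real.sqrt (gg (Real.sqrt (4 * t + 9))))
        Filter.atTop (nhds 1) := by
      have := (Real.continuous_sqrt.tendsto 1).comp h3
      simpa [Function.comp_def] using this
    apply h4.congr'
    filter_upwards [Filter.eventually_ge_atTop (1:ℝ)] with t ht
    exact (fR_eq ht).symm
  · intro t ht
    rw [fR_eq ht]
    have := Real.sqrt_lt_sqrt (gg_nonneg (u_gt_three ht)) (gg_lt_one (u_gt_three ht))
    simpa using this
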